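/- (Proposition 1, Non-degenerate Covariance Matrix.) Let p_1,…,p_n ∈ ℝ³ be points with unit normals n_1,…,n_n ∈ ℝ³ (‖n_j‖ = 1), fix an index i and a nonempty finite neighborhood N_i ⊆ {1,…,n}, and for thresholds a ∈ [0,π], b ∈ [a,π] define weights w_{ij} = sig^cos_{a,b}(∠(n_i,n_j)) where ∠(n_i,n_j) = arccos⟨n_i,n_j⟩, the barycenter p̄_i = (1/|N_i|)·Σ_{j∈N_i} p_j, and the weighted covariance matrix C_i = Σ_{j∈N_i} w_{ij}·(p_j − p̄_i)(p_j − p̄_i)ᵀ. Suppose there exist ℓ₁, ℓ₂ ∈ N_i with ℓ₁ ≠ ℓ₂, p_{ℓ₁} ≠ p_{ℓ₂}, n_{ℓ₁} ≠ −n_i, and n_{ℓ₂} ≠ −n_i. Then for every a ∈ [0,π] there exists b ∈ [a,π] (namely b = π) such that the trace of C_i, i.e., the sum of its eigenvalues, is strictly positive. -/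

import Mathlib

open RealInnerProductSpace

/-- The cosine-sigmoid weighting function `sig^cos_{a,b} : [0,π] → [0,1]`:
`1` on `[0,a)`, the cosine interpolation on `[a,b]` (when `a < b`),
and `0` on `(b,π]`; when `a = b` it is `1` for `x < a` and `0` for `x ≥ a`. -/
noncomputable def sigCos (a b x : ℝ) : ℝ :=
  if x < a then 1
  else if a < b ∧ x ≤ b then (1 / 2) * Real.cos (Real.pi * (x - a) / (b - a)) + 1 / 2
  else 0

/-- The barycenter `p̄ = (1/|N|)·Σ_{j∈N} p j` of the points indexed by `N`. -/
noncomputable def barycenter {n : ℕ} (p : Fin n → EuclideanSpace ℝ (Fin 3))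
    (N : Finset (Fin n)) : EuclideanSpace ℝ (Fin 3) :=
  (N.card : ℝ)⁻¹ • ∑ j ∈ N, p j

/-- The weighted covariance matrix `C = Σ_{j∈N} w j · (p j − p̄)(p j − p̄)ᵀ`. -/
noncomputable def covMatrix {n : ℕ} (p : Fin n → EuclideanSpace ℝ (Fin 3))
    (N : Finset (Fin n)) (w : Fin n → ℝ) : Matrix (Fin 3) (Fin 3) ℝ :=
  ∑ j ∈ N, w j • Matrix.vecMulVec (p j - barycenter p N) (p j - barycenter p N)

lemma sigCos_nonneg (a b x : ℝ) : 0 ≤ sigCos a b x := by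
  unfold sigCos
  split_ifs with h1 h2
  · norm_num
  · nlinarith [Real.neg_one_le_cos (Real.pi * (x - a) / (b - a))]
  · exact le_refl 0

lemma sigCos_pos_of_lt_pi {a x : ℝ} (ha : a ≤ Real.pi) (hx0 : 0 ≤ x)
    (hx : x < Real.pi) : 0 < sigCos a Real.pi x := by
  unfold sigCos
  split_ifs with h1 h2
  · norm_num
  · -- a ≤ x < π, a < π
    push_neg at h1
    have hab : 0 < Real.pi - a := by linarith [h2.1]
    have ht0 : 0 ≤ Real.pi * (x - a) / (Real.pi - a) :=
      div_nonneg (mul_nonneg Real.pi_pos.le (by linarith)) hab.le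
    have ht1 : Real.pi * (x - a) / (Real.pi - a) < Real.pi := by
      rw [div_lt_iff₀ hab]
      have := Real.pi_pos
      nlinarith
    have := Real.cos_lt_cos_of_nonneg_of_le_pi ht0 le_rfl ht1
    rw [Real.cos_pi] at this
    nlinarith
  · push_neg at h1
    exfalso
    rcases lt_or_eq_of_le (lt_of_le_of_lt h1 hx).le with h | h
    · exact h2 ⟨h, hx.le⟩
    · linarith [h1, hx]

/-- Proposition 1 (Non-degenerate Covariance Matrix). -/
theorem stmt_6 (n : ℕ) (p : Fin n → EuclideanSpace ℝ (Fin 3))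
    (nrm : Fin n → EuclideanSpace ℝ (Fin 3)) (hnrm : ∀ j, ‖nrm j‖ = 1)
    (i : Fin n) (N : Finset (Fin n)) (hN : N.Nonempty)
    (ℓ₁ ℓ₂ : Fin n) (hℓ₁ : ℓ₁ ∈ N) (hℓ₂ : ℓ₂ ∈ N) (hℓne : ℓ₁ ≠ ℓ₂)
    (hpne : p ℓ₁ ≠ p ℓ₂)
    (hn₁ : nrm ℓ₁ ≠ -nrm i) (hn₂ : nrm ℓ₂ ≠ -nrm i)
    (a : ℝ) (ha : a ∈ Set.Icc 0 Real.pi) :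
    ∃ b ∈ Set.Icc a Real.pi,
      0 < Matrix.trace
        (covMatrix p N (fun j => sigCos a b (Real.arccos ⟪nrm i, nrm j⟫))) := by
  refine ⟨Real.pi, ⟨ha.2, le_rfl⟩, ?_⟩
  set w : Fin n → ℝ := fun j => sigCos a Real.pi (Real.arccos ⟪nrm i, nrm j⟫) with hw
  -- weights are positive for j with nrm j ≠ -nrm i
  have hwpos : ∀ j : Fin n, nrm j ≠ -nrm i → 0 < w j := by
    intro j hj
    apply sigCos_pos_of_lt_pi ha.2 (Real.arccos_nonneg _)
    have hlt1 : ⟪nrm i, -nrm j⟫ < 1 := by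
      rw [inner_lt_one_iff_real_of_norm_eq_one (hnrm i) (by rw [norm_neg]; exact hnrm j)]
      intro h
      exact hj (by rw [h, neg_neg])
    have hgt : (-1 : ℝ) < ⟪nrm i, nrm j⟫ := by
      rw [inner_neg_right] at hlt1; linarith
    have := Real.arccos_le_pi ⟪nrm i, nrm j⟫
    rcases lt_or_eq_of_le this with h | h
    · exact h
    · exact absurd (Real.arccos_eq_pi.mp h) (by linarith)
  -- trace formula
  have htr : Matrix.trace (covMatrix p N w) =
      ∑ j ∈ N, w j * ∑ k, (p j - barycenter p N) k * (p j - barycenter p N) k := by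
    unfold covMatrix
    rw [Matrix.trace_sum]
    refine Finset.sum_congr rfl fun j _ => ?_
    rw [Matrix.trace_smul, smul_eq_mul]
    simp [Matrix.trace, Matrix.vecMulVec_apply]
  rw [htr]
  have hterm : ∀ j ∈ N, 0 ≤ w j * ∑ k, (p j - barycenter p N) k * (p j - barycenter p N) k := by
    intro j _
    exact mul_nonneg (sigCos_nonneg _ _ _)
      (Finset.sum_nonneg fun k _ => mul_self_nonneg _)
  -- one of ℓ₁, ℓ₂ differs from the barycenter
  have hex : ∃ ℓ ∈ N, nrm ℓ ≠ -nrm i ∧ p ℓ ≠ barycenter p N := by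
    by_cases h : p ℓ₁ = barycenter p N
    · exact ⟨ℓ₂, hℓ₂, hn₂, fun h2 => hpne (h.trans h2.symm)⟩
    · exact ⟨ℓ₁, hℓ₁, hn₁, h⟩
  obtain ⟨ℓ, hℓ, hnℓ, hpℓ⟩ := hex
  refine Finset.sum_pos' hterm ⟨ℓ, hℓ, ?_⟩
  apply mul_pos (hwpos ℓ hnℓ)
  have hv : (p ℓ - barycenter p N) ≠ 0 := sub_ne_zero.mpr hpℓ
  obtain ⟨k, hk⟩ : ∃ k, (p ℓ - barycenter p N) k ≠ 0 := by
    by_contra h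
    push_neg at h
    exact hv (PiLp.ext h)
  exact Finset.sum_pos' (fun k _ => mul_self_nonneg _) ⟨k, Finset.mem_univ k, mul_self_pos.mpr hk⟩
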